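/- Let a ∈ C_K with |a| > 1, set R = |a|^{−1/(p−1)}, let m ≥ 1 be an integer, and set r = R^{1−p^{−m}}. Then D̄_1(0) ⊆ φ_a^m(D̄_r(0)); in particular, there exists x ∈ C_K with |x| = r and φ_a^m(x) = 1. -/

import Mathlib

/-- The polynomial map `φ_a(z) = (1-a) z^(p+1) + a z^p`. -/
def phi {K : Type*} [Field K] (p : ℕ) (a : K) (z : K) : K :=
  (1 - a) * z ^ (p + 1) + a * z ^ p

section Aux

variable {K : Type*} [NontriviallyNormedField K] [IsUltrametricDist K] [IsAlgClosed K]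

lemma norm_add_eq_left {u v : K} (h : ‖v‖ < ‖u‖) : ‖u + v‖ = ‖u‖ := by
  rw [IsUltrametricDist.norm_add_eq_max_of_norm_ne_norm h.ne', max_eq_left h.le]

lemma phi_zero {p : ℕ} (hp : 0 < p) (a : K) : phi p a 0 = 0 := by
  simp [phi, zero_pow hp.ne', zero_pow (Nat.succ_ne_zero p)]

/-- One-step lemma: any `y ≠ 0` with `‖y‖ ≤ 1` has a `φ_a`-preimage `x` with
`‖x‖ ^ p * ‖a‖ = ‖y‖`. -/
lemma step {p : ℕ} (hp : 0 < p) {a : K} (ha : 1 < ‖a‖) {y : K} (hy0 : y ≠ 0)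
    (hy : ‖y‖ ≤ 1) : ∃ x : K, phi p a x = y ∧ ‖x‖ ^ p * ‖a‖ = ‖y‖ := by
  have h1a : ‖1 - a‖ = ‖a‖ := by
    have : ‖(1 : K) + -a‖ = max ‖(1:K)‖ ‖-a‖ := by
      refine IsUltrametricDist.norm_add_eq_max_of_norm_ne_norm ?_
      simp only [norm_one, norm_neg]; exact ha.ne
    simpa [sub_eq_add_neg, max_eq_right (by simpa using ha.le)] using this
  have ha0 : (0:ℝ) < ‖a‖ := lt_trans one_pos ha
  have hlc : (1 : K) - a ≠ 0 := by
    intro h; rw [h, norm_zero] at h1a; exact ha0.ne' h1a.symm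
  set P : Polynomial K :=
    Polynomial.C (1 - a) * Polynomial.X ^ (p + 1) +
      (Polynomial.C a * Polynomial.X ^ p - Polynomial.C y) with hP
  have hdeg : P.natDegree = p + 1 := by
    rw [hP]; compute_degree!
  have hne : P ≠ 0 := fun h => by simp [h] at hdeg
  have hsplit : Polynomial.Splits P := IsAlgClosed.splits P
  have hcard : Multiset.card P.roots = p + 1 := by
    rw [Polynomial.splits_iff_card_roots.mp hsplit, hdeg]
  have hlcoeff : P.leadingCoeff = 1 - a := by
    have hco : P.coeff (p + 1) = 1 - a := by
      rw [hP]
      simp only [Polynomial.coeff_add, Polynomial.coeff_sub, Polynomial.coeff_C_mul,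
        Polynomial.coeff_X_pow, Polynomial.coeff_C]
      rw [if_neg (by omega : ¬ (p + 1 = p)), if_neg (Nat.succ_ne_zero p)]
      simp
    rw [Polynomial.leadingCoeff, hdeg, hco]
  -- each root is a preimage of y under phi
  have hroot : ∀ x ∈ P.roots, phi p a x = y := by
    intro x hx
    have := Polynomial.isRoot_of_mem_roots hx
    simp only [hP, Polynomial.IsRoot, Polynomial.eval_add, Polynomial.eval_sub,
      Polynomial.eval_mul, Polynomial.eval_pow, Polynomial.eval_C, Polynomial.eval_X] at this
    unfold phi; linear_combination this
  -- each root has norm 1 or norm^p * ‖a‖ = ‖y‖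
  have hnorm : ∀ x ∈ P.roots, ‖x‖ = 1 ∨ ‖x‖ ^ p * ‖a‖ = ‖y‖ := by
    intro x hx
    have hphix : (1 - a) * x ^ (p + 1) + a * x ^ p = y := hroot x hx
    have hx0 : x ≠ 0 := by
      intro h; subst h
      rw [zero_pow (Nat.succ_ne_zero p), zero_pow hp.ne', mul_zero, mul_zero, add_zero] at hphix
      exact hy0 hphix.symm
    have hx0' : (0:ℝ) < ‖x‖ := norm_pos_iff.mpr hx0
    rcases lt_trichotomy ‖x‖ 1 with h1 | h1 | h1
    · right
      have hlt : ‖(1 - a) * x ^ (p + 1)‖ < ‖a * x ^ p‖ := by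
        rw [norm_mul, norm_mul, norm_pow, norm_pow, h1a, pow_succ]
        calc ‖a‖ * (‖x‖ ^ p * ‖x‖) < ‖a‖ * (‖x‖ ^ p * 1) := by
              apply mul_lt_mul_of_pos_left _ ha0
              exact mul_lt_mul_of_pos_left h1 (pow_pos hx0' p)
          _ = ‖a‖ * ‖x‖ ^ p := by ring
      have heq := norm_add_eq_left hlt
      rw [add_comm (a * x ^ p)] at heq
      rw [hphix, norm_mul, norm_pow] at heq
      rw [heq]; ring
    · left; exact h1
    · exfalso
      have hlt : ‖a * x ^ p‖ < ‖(1 - a) * x ^ (p + 1)‖ := by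
        rw [norm_mul, norm_mul, norm_pow, norm_pow, h1a, pow_succ]
        calc ‖a‖ * ‖x‖ ^ p = ‖a‖ * (‖x‖ ^ p * 1) := by ring
          _ < ‖a‖ * (‖x‖ ^ p * ‖x‖) := by
              apply mul_lt_mul_of_pos_left _ ha0
              exact mul_lt_mul_of_pos_left h1 (pow_pos hx0' p)
      have heq := norm_add_eq_left hlt
      rw [hphix, norm_mul, norm_pow, h1a, pow_succ] at heq
      have h1' : (1:ℝ) ≤ ‖x‖ ^ p := one_le_pow₀ h1.le
      have h2 : (1:ℝ) < ‖x‖ ^ p * ‖x‖ := by nlinarith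
      have h3 : (1:ℝ) < ‖a‖ * (‖x‖ ^ p * ‖x‖) := one_lt_mul ha.le h2
      rw [← heq] at h3
      exact absurd hy (not_le.mpr h3)
  -- product of root norms
  have hfact := Polynomial.Splits.eq_prod_roots hsplit
  have hprod : (P.roots.map fun x => ‖x‖).prod = ‖y‖ / ‖a‖ := by
    have h0 : P.eval 0 = -y := by
      simp [hP, zero_pow (Nat.succ_ne_zero p), zero_pow hp.ne']
    have := congrArg (fun Q => ‖Q.eval 0‖) hfact
    simp only [Polynomial.eval_mul, Polynomial.eval_C, h0, norm_neg,
      Polynomial.eval_multiset_prod, Multiset.map_map, Function.comp] at this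
    rw [norm_mul, hlcoeff, h1a] at this
    have hnms : ∀ s : Multiset K, ‖s.prod‖ = (s.map fun z => ‖z‖).prod := by
      intro s
      induction s using Multiset.induction with
      | empty => simp
      | cons b s ih => simp [norm_mul, ih]
    rw [hnms, Multiset.map_map] at this
    have hmp : (P.roots.map fun x => ‖Polynomial.eval 0 (Polynomial.X - Polynomial.C x)‖)
        = P.roots.map fun x => ‖x‖ := by
      apply Multiset.map_congr rfl
      intro x _
      simp
    rw [Function.comp_def, hmp] at this
    field_simp
    linarith [this]
  -- not all roots can have norm 1
  by_contra hcon
  push_neg at hcon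
  have hall : ∀ x ∈ P.roots, ‖x‖ = 1 := by
    intro x hx
    rcases hnorm x hx with h | h
    · exact h
    · exact absurd h (hcon x (hroot x hx))
  have : (P.roots.map fun x => ‖x‖).prod = 1 := by
    rw [Multiset.prod_eq_one]
    intro z hz
    obtain ⟨x, hx, rfl⟩ := Multiset.mem_map.mp hz
    exact hall x hx
  rw [hprod] at this
  have : ‖y‖ = ‖a‖ := by field_simp at this; linarith
  linarith [hy, ha, this]

/-- Iterated version. -/
lemma step_iter {p : ℕ} (hp : 0 < p) {a : K} (ha : 1 < ‖a‖) (m : ℕ) :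
    ∀ y : K, y ≠ 0 → ‖y‖ ≤ 1 →
      ∃ x : K, (phi p a)^[m] x = y ∧
        ‖x‖ ^ (p ^ m) * ‖a‖ ^ (∑ i ∈ Finset.range m, p ^ i) = ‖y‖ := by
  induction m with
  | zero => intro y hy0 hy; exact ⟨y, rfl, by simp⟩
  | succ m ih =>
    intro y hy0 hy
    obtain ⟨x', hx', hnx'⟩ := ih y hy0 hy
    have ha0 : (0:ℝ) < ‖a‖ := lt_trans one_pos ha
    have hx'0 : x' ≠ 0 := by
      intro h; subst h
      rw [norm_zero, zero_pow (pow_ne_zero m hp.ne'), zero_mul] at hnx'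
      exact hy0 (norm_eq_zero.mp hnx'.symm)
    have hx'le : ‖x'‖ ≤ 1 := by
      by_contra hgt
      push_neg at hgt
      have h1 : (1:ℝ) < ‖x'‖ ^ (p ^ m) := by
        rw [one_lt_pow_iff_of_nonneg (norm_nonneg x') (pow_ne_zero m hp.ne')]; exact hgt
      have h2 : (1:ℝ) ≤ ‖a‖ ^ (∑ i ∈ Finset.range m, p ^ i) := one_le_pow₀ ha.le
      nlinarith
    obtain ⟨x, hx, hnx⟩ := step hp ha hx'0 hx'le
    refine ⟨x, ?_, ?_⟩
    · rw [Function.iterate_succ_apply, hx, hx']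
    · have hxp : ‖x‖ ^ p = ‖x'‖ / ‖a‖ := by
        rw [eq_div_iff ha0.ne']; exact hnx
      have hA : (‖a‖ ^ (p ^ m)) ≠ 0 := pow_ne_zero _ ha0.ne'
      have e1 : ‖x‖ ^ p ^ (m + 1) = (‖x'‖ / ‖a‖) ^ p ^ m := by
        rw [← hxp, ← pow_mul, ← pow_succ']
      rw [Finset.sum_range_succ, e1, pow_add, div_pow]
      calc ‖x'‖ ^ p ^ m / ‖a‖ ^ p ^ m *
            (‖a‖ ^ (∑ i ∈ Finset.range m, p ^ i) * ‖a‖ ^ p ^ m)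
          = ‖x'‖ ^ p ^ m * ‖a‖ ^ (∑ i ∈ Finset.range m, p ^ i) *
            (‖a‖ ^ p ^ m / ‖a‖ ^ p ^ m) := by ring
        _ = ‖x'‖ ^ p ^ m * ‖a‖ ^ (∑ i ∈ Finset.range m, p ^ i) := by
            rw [div_self hA, mul_one]
        _ = ‖y‖ := hnx'

end Aux

/-- For `|a| > 1`, `R = |a|^{-1/(p-1)}`, `m ≥ 1` and `r = R^{1-p^{-m}}`, the image
`φ_a^m(D̄_r(0))` contains `D̄_1(0)`; in particular there is `x` with `|x| = r` and
`φ_a^m(x) = 1`. -/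
theorem closedBall_subset_iterate_image
    {K : Type*} [NontriviallyNormedField K] [IsUltrametricDist K]
    [CompleteSpace K] [IsAlgClosed K]
    (p : ℕ) (hp : p.Prime) (hpK : ‖(p : K)‖ < 1)
    (a : K) (ha : 1 < ‖a‖) (R : ℝ)
    (hR : R = ‖a‖ ^ (-(1 : ℝ) / ((p : ℝ) - 1)))
    (m : ℕ) (hm : 1 ≤ m) (r : ℝ)
    (hr : r = R ^ ((1 : ℝ) - (p : ℝ) ^ (-(m : ℤ)))) :
    Metric.closedBall (0 : K) 1 ⊆ (phi p a)^[m] '' Metric.closedBall (0 : K) r ∧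
      ∃ x : K, ‖x‖ = r ∧ (phi p a)^[m] x = 1 := by
  have hp0 : 0 < p := hp.pos
  have ha0 : (0:ℝ) < ‖a‖ := lt_trans one_pos ha
  have hp1R : (1:ℝ) < (p:ℝ) := by exact_mod_cast hp.one_lt
  set S : ℕ := ∑ i ∈ Finset.range m, p ^ i with hS
  -- key : r ^ (p ^ m) = (‖a‖ ^ S)⁻¹
  have hrpos : 0 < r := by
    rw [hr, hR]; positivity
  have hkey : r ^ (p ^ m) = (‖a‖ ^ S)⁻¹ := by
    have hSr : ((S : ℝ)) = ((p:ℝ) ^ m - 1) / ((p:ℝ) - 1) := by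
      rw [hS]
      push_cast
      rw [geom_sum_eq hp1R.ne']
    rw [hr, hR, ← Real.rpow_natCast (_ ^ ((1:ℝ) - _)) (p ^ m),
      ← Real.rpow_mul (Real.rpow_nonneg ha0.le _), ← Real.rpow_mul ha0.le]
    have hexp : -(1:ℝ) / ((p:ℝ) - 1) * (((1:ℝ) - (p:ℝ) ^ (-(m:ℤ))) * ((p:ℕ) ^ m : ℕ)) = -(S:ℝ) := by
      rw [hSr]
      push_cast
      have hzp : ((p:ℝ) ^ (-(m:ℤ))) * ((p:ℝ) ^ m) = 1 := by
        rw [← Real.rpow_intCast, ← Real.rpow_natCast, ← Real.rpow_add (lt_trans one_pos hp1R)]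
        push_cast; simp
      rw [show ((1:ℝ) - (p:ℝ) ^ (-(m:ℤ))) * ((p:ℝ) ^ m) = (p:ℝ) ^ m - 1 by
        rw [sub_mul, one_mul, hzp]]
      ring
    rw [hexp, Real.rpow_neg ha0.le, Real.rpow_natCast]
  -- main existence result
  have main : ∀ y : K, ‖y‖ ≤ 1 → y ≠ 0 →
      ∃ x : K, (phi p a)^[m] x = y ∧ ‖x‖ ^ (p ^ m) = ‖y‖ * r ^ (p ^ m) := by
    intro y hy hy0
    obtain ⟨x, hx, hnx⟩ := step_iter hp0 ha m y hy0 hy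
    refine ⟨x, hx, ?_⟩
    rw [hkey, ← hnx, ← hS]
    field_simp
  constructor
  · intro y hy
    simp only [Metric.mem_closedBall, dist_zero_right] at hy
    by_cases hy0 : y = 0
    · refine ⟨0, ?_, ?_⟩
      · simp [Metric.mem_closedBall, hrpos.le]
      · rw [Function.iterate_fixed (phi_zero hp0 a) m, hy0]
    · obtain ⟨x, hx, hnx⟩ := main y hy hy0
      refine ⟨x, ?_, hx⟩
      simp only [Metric.mem_closedBall, dist_zero_right]
      have hle : ‖x‖ ^ (p ^ m) ≤ r ^ (p ^ m) := by
        rw [hnx]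
        nlinarith [pow_pos hrpos (p ^ m)]
      exact (pow_le_pow_iff_left₀ (norm_nonneg x) hrpos.le (pow_ne_zero m hp0.ne')).mp hle
  · obtain ⟨x, hx, hnx⟩ := main 1 (by simp) one_ne_zero
    rw [norm_one, one_mul] at hnx
    exact ⟨x, (pow_left_inj₀ (norm_nonneg x) hrpos.le (pow_ne_zero m hp0.ne')).mp hnx, hx⟩
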